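/- Let L ⊆ ℂ⊕ℂ be a J-complex line, where J(z,w) = (iw,iz). Then the restriction of m((z₁,w₁),(z₂,w₂)) = ⟨z₁,w₂⟩+⟨z₂,w₁⟩ to L is either positive-definite, negative-definite, or identically zero; and it is identically zero if and only if L intersects V = {0}⊕ℂ non-trivially, i.e., if and only if the first projection π₁ has non-trivial kernel on L. -/
import Mathlib


open Complex

/-- `m((z₁,w₁),(z₂,w₂)) = ⟨z₁,w₂⟩ + ⟨z₂,w₁⟩`. -/
def mForm (p q : ℂ × ℂ) : ℝ := (p.1 * (starRingEnd ℂ) q.2).re + (q.1 * (starRingEnd ℂ) p.2).re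

/-- `J(z,w) = (iw, iz)`. -/
def Jstr (p : ℂ × ℂ) : ℂ × ℂ := (Complex.I * p.2, Complex.I * p.1)


lemma mForm_expand (p : ℂ × ℂ) (a b c d : ℝ) :
    mForm (a • p + b • Jstr p) (c • p + d • Jstr p)
      = (a * c + b * d) * mForm p p := by
  obtain ⟨z, w⟩ := p
  simp only [mForm, Jstr, Prod.smul_mk, Prod.mk_add_mk, Complex.real_smul,
    map_add, map_mul, Complex.conj_ofReal, Complex.conj_I]
  simp only [Complex.mul_re, Complex.mul_im, Complex.add_re, Complex.add_im,
    Complex.ofReal_re, Complex.ofReal_im, Complex.I_re, Complex.I_im,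
    Complex.conj_re, Complex.conj_im, Complex.neg_re, Complex.neg_im]
  ring

lemma indep (p : ℂ × ℂ) (hp : p ≠ 0) (a b : ℝ) (h : a • p + b • Jstr p = 0) :
    a = 0 ∧ b = 0 := by
  have h1 : (a:ℂ) * p.1 + b * (Complex.I * p.2) = 0 := by
    have := congrArg Prod.fst h
    simpa [Jstr, Complex.real_smul] using this
  have h2 : (a:ℂ) * p.2 + b * (Complex.I * p.1) = 0 := by
    have := congrArg Prod.snd h
    simpa [Jstr, Complex.real_smul] using this
  have e1 : ((a:ℂ)^2 + b^2) * p.1 = 0 := by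
    linear_combination (a:ℂ) * h1 - (b:ℂ) * Complex.I * h2 + (b:ℂ)^2 * p.1 * Complex.I_sq
  have e2 : ((a:ℂ)^2 + b^2) * p.2 = 0 := by
    linear_combination (a:ℂ) * h2 - (b:ℂ) * Complex.I * h1 + (b:ℂ)^2 * p.2 * Complex.I_sq
  have hab : (a:ℂ)^2 + b^2 = 0 := by
    rcases mul_eq_zero.mp e1 with h | h
    · exact h
    rcases mul_eq_zero.mp e2 with h' | h'
    · exact h'
    exact absurd (Prod.ext h h') hp
  have habR : a^2 + b^2 = 0 := by exact_mod_cast hab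
  constructor <;> nlinarith

theorem sign_of_m_on_complex_lines (L : Submodule ℝ (ℂ × ℂ))
    (hdim : Module.finrank ℝ L = 2) (hJ : ∀ p ∈ L, Jstr p ∈ L) :
    ((∀ p ∈ L, p ≠ 0 → 0 < mForm p p) ∨
     (∀ p ∈ L, p ≠ 0 → mForm p p < 0) ∨
     (∀ p ∈ L, ∀ q ∈ L, mForm p q = 0)) ∧
    ((∀ p ∈ L, ∀ q ∈ L, mForm p q = 0) ↔
      ∃ w : ℂ, w ≠ 0 ∧ ((0 : ℂ), w) ∈ L) := by
  have hbot : L ≠ ⊥ := by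
    intro h; rw [h] at hdim; simp at hdim
  obtain ⟨p, hpL, hp0⟩ := Submodule.exists_mem_ne_zero_of_ne_bot hbot
  have hli : LinearIndependent ℝ ![p, Jstr p] :=
    LinearIndependent.pair_iff.mpr (fun a b h => indep p hp0 a b h)
  have hle : Submodule.span ℝ {p, Jstr p} ≤ L := by
    rw [Submodule.span_le]
    rintro x hx
    simp only [Set.mem_insert_iff, Set.mem_singleton_iff] at hx
    rcases hx with rfl | rfl
    · exact hpL
    · exact hJ p hpL
  have hsp : Submodule.span ℝ {p, Jstr p} = L := by
    apply Submodule.eq_of_le_of_finrank_le hle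
    rw [hdim]
    have hr : ({p, Jstr p} : Set (ℂ × ℂ)) = Set.range ![p, Jstr p] := by
      simp [Matrix.range_cons, Matrix.range_empty, Set.pair_comm]
    rw [hr, finrank_span_eq_card hli]
    simp
  have hrep : ∀ q ∈ L, ∃ a b : ℝ, a • p + b • Jstr p = q := by
    intro q hq
    rw [← hsp] at hq
    exact Submodule.mem_span_pair.mp hq
  have hzero : mForm p p = 0 → ∀ q ∈ L, ∀ r ∈ L, mForm q r = 0 := by
    intro h0 q hq r hr
    obtain ⟨a, b, rfl⟩ := hrep q hq
    obtain ⟨c, d, rfl⟩ := hrep r hr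
    rw [mForm_expand, h0, mul_zero]
  have hposc : ∀ a b : ℝ, a • p + b • Jstr p ≠ 0 → 0 < a * a + b * b := by
    intro a b hq
    rcases eq_or_lt_of_le (add_nonneg (mul_self_nonneg a) (mul_self_nonneg b)) with h | h
    · exfalso
      have ha : a = 0 := by nlinarith
      have hb : b = 0 := by nlinarith
      exact hq (by simp [ha, hb])
    · exact h
  refine ⟨?_, ?_, ?_⟩
  · rcases lt_trichotomy (mForm p p) 0 with hneg | h0 | hpos
    · right; left
      intro q hq hq0
      obtain ⟨a, b, rfl⟩ := hrep q hq
      rw [mForm_expand]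
      nlinarith [hposc a b hq0]
    · right; right; exact hzero h0
    · left
      intro q hq hq0
      obtain ⟨a, b, rfl⟩ := hrep q hq
      rw [mForm_expand]
      nlinarith [hposc a b hq0]
  · intro hall
    have h0 : mForm p p = 0 := hall p hpL p hpL
    have hre : (p.1 * (starRingEnd ℂ) p.2).re = 0 := by
      unfold mForm at h0; linarith
    by_cases hw : p.2 = 0
    · refine ⟨Complex.I * p.1, ?_, ?_⟩
      · have hz : p.1 ≠ 0 := by
          intro h; exact hp0 (Prod.ext h hw)
        exact mul_ne_zero Complex.I_ne_zero hz
      · have : ((0:ℂ), Complex.I * p.1) = Jstr p := by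
          simp [Jstr, hw]
        rw [this]; exact hJ p hpL
    · set s : ℝ := (p.1 * (starRingEnd ℂ) p.2).im with hs
      set c : ℂ × ℂ := (Complex.normSq p.2) • p + (-s) • Jstr p with hc
      have hcL : c ∈ L := L.add_mem (L.smul_mem _ hpL) (L.smul_mem _ (hJ p hpL))
      have key2 : p.1 * (starRingEnd ℂ) p.2 = Complex.I * s := by
        apply Complex.ext <;> simp [hre, hs]
      have hmul : (Complex.normSq p.2 : ℂ) * p.1 = (s:ℂ) * (Complex.I * p.2) := by
        calc (Complex.normSq p.2 : ℂ) * p.1 = p.1 * (p.2 * (starRingEnd ℂ) p.2) := by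
              rw [Complex.mul_conj]; ring
          _ = (p.1 * (starRingEnd ℂ) p.2) * p.2 := by ring
          _ = (Complex.I * s) * p.2 := by rw [key2]
          _ = (s:ℂ) * (Complex.I * p.2) := by ring
      have hc1 : c.1 = 0 := by
        have : c.1 = (Complex.normSq p.2 : ℂ) * p.1 + (-s : ℝ) * (Complex.I * p.2) := by
          simp [hc, Jstr, Complex.real_smul]
        rw [this, hmul]
        push_cast
        ring
      have hc0 : c ≠ 0 := by
        intro h
        obtain ⟨h1, _⟩ := indep p hp0 (Complex.normSq p.2) (-s) h
        exact hw (Complex.normSq_eq_zero.mp h1)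
      refine ⟨c.2, ?_, ?_⟩
      · intro h2
        exact hc0 (Prod.ext hc1 h2)
      · have : ((0:ℂ), c.2) = c := Prod.ext hc1.symm rfl
        rw [this]; exact hcL
  · rintro ⟨w, hw, hwL⟩
    obtain ⟨a, b, hab⟩ := hrep ((0:ℂ), w) hwL
    have h1 : mForm ((0:ℂ), w) ((0:ℂ), w) = 0 := by simp [mForm]
    have h2 : (a * a + b * b) * mForm p p = 0 := by
      rw [← h1, ← hab, mForm_expand]
    have hq0 : a • p + b • Jstr p ≠ 0 := by
      rw [hab]
      intro h
      exact hw (by simpa [Prod.ext_iff] using h)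
    have hpos := hposc a b hq0
    have h0 : mForm p p = 0 := by
      rcases mul_eq_zero.mp h2 with h | h
      · exact absurd h hpos.ne'
      · exact h
    exact hzero h0
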